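/- Assume the CFL condition λ L_V ≤ 1. Then the periodic explicit Euler FtL scheme is an ℓ¹ contraction: if (y_i^n) and (ỹ_i^n) are two sequences generated by the scheme, then for every n ≥ 0, Σ_{i=1}^{N−1} |y_i^n − ỹ_i^n| ≤ Σ_{i=1}^{N−1} |y_i^0 − ỹ_i^0|. -/

import Mathlib

/-- `y n i`, `i = 1, …, N-1`, is generated by the periodic explicit Euler
Follow-the-Leader scheme `y_i^{n+1} = y_i^n + λ(V(y_{i+1}^n) − V(y_i^n))`,
with the periodic convention `y_N^n := y_1^n`. -/
def IsEulerFtL (N : ℕ) (lam : ℝ) (V : ℝ → ℝ) (y : ℕ → ℕ → ℝ) : Prop :=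
  (∀ n : ℕ, y n N = y n 1) ∧
  ∀ n : ℕ, ∀ i ∈ Finset.Icc 1 (N - 1),
    y (n + 1) i = y n i + lam * (V (y n (i + 1)) - V (y n i))

private lemma step_abs (V : ℝ → ℝ) (LV : NNReal) (hVlip : LipschitzWith LV V)
    (hVmono : Monotone V) (lam : ℝ) (hlam : 0 ≤ lam) (hCFL : lam * (LV : ℝ) ≤ 1)
    (a b : ℝ) :
    |a - b - lam * (V a - V b)| ≤ |a - b| - lam * |V a - V b| := by
  have hL0 : (0:ℝ) ≤ LV := LV.coe_nonneg
  have hlip : |V a - V b| ≤ (LV : ℝ) * |a - b| := by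
    have := hVlip.dist_le_mul a b
    simpa [Real.dist_eq] using this
  rcases le_total b a with h | h
  · have hd : 0 ≤ a - b := by linarith
    have he : 0 ≤ V a - V b := by have := hVmono h; linarith
    rw [abs_of_nonneg hd, abs_of_nonneg he] at *
    have h1 : lam * (V a - V b) ≤ lam * ((LV : ℝ) * (a - b)) :=
      mul_le_mul_of_nonneg_left hlip hlam
    have h2 : lam * ((LV : ℝ) * (a - b)) ≤ a - b := by nlinarith
    rw [abs_of_nonneg (by linarith)]
  · have hd : a - b ≤ 0 := by linarith
    have he : V a - V b ≤ 0 := by have := hVmono h; linarith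
    rw [abs_of_nonpos hd, abs_of_nonpos he] at *
    have h1 : lam * (-(V a - V b)) ≤ lam * ((LV : ℝ) * (-(a - b))) :=
      mul_le_mul_of_nonneg_left hlip hlam
    have h2 : lam * ((LV : ℝ) * (-(a - b))) ≤ -(a - b) := by nlinarith
    rw [abs_of_nonpos (by linarith)]
    linarith

private lemma shift_sum (N : ℕ) (hN : 2 ≤ N) (f : ℕ → ℝ) (hf : f N = f 1) :
    ∑ i ∈ Finset.Icc 1 (N - 1), f (i + 1) = ∑ i ∈ Finset.Icc 1 (N - 1), f i := by
  have himg : Finset.image (· + 1) (Finset.Icc 1 (N - 1)) = Finset.Icc 2 N := by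
    ext j
    simp only [Finset.mem_image, Finset.mem_Icc]
    constructor
    · rintro ⟨i, ⟨h1, h2⟩, rfl⟩; omega
    · rintro ⟨h1, h2⟩; exact ⟨j - 1, by omega, by omega⟩
  have h1 : ∑ i ∈ Finset.Icc 1 (N - 1), f (i + 1) = ∑ i ∈ Finset.Icc 2 N, f i := by
    rw [← himg, Finset.sum_image (by intros a _ b _ h; simp only at h; omega)]
  have hins1 : Finset.Icc 2 N = insert N (Finset.Icc 2 (N - 1)) := by
    ext j; simp only [Finset.mem_Icc, Finset.mem_insert]; omega
  have hins2 : Finset.Icc 1 (N - 1) = insert 1 (Finset.Icc 2 (N - 1)) := by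
    ext j; simp only [Finset.mem_Icc, Finset.mem_insert]; omega
  rw [h1, hins1, Finset.sum_insert (by simp [Finset.mem_Icc]; omega)]
  conv_rhs => rw [hins2]
  rw [Finset.sum_insert (by simp [Finset.mem_Icc]), hf]

/-- Under the CFL condition, the periodic explicit Euler FtL scheme is an `ℓ¹`
contraction: `Σ_i |y_i^n − ỹ_i^n| ≤ Σ_i |y_i^0 − ỹ_i^0|` for every `n`. -/
theorem eulerFtL_l1_contraction
    (N : ℕ) (hN : 2 ≤ N) (ℓ Δt : ℝ) (hℓ : 0 < ℓ) (hΔt : 0 < Δt)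
    (V : ℝ → ℝ) (LV : NNReal) (hVlip : LipschitzWith LV V) (hVmono : Monotone V)
    (hCFL : Δt / ℓ * (LV : ℝ) ≤ 1)
    (y yt : ℕ → ℕ → ℝ)
    (hy : IsEulerFtL N (Δt / ℓ) V y) (hyt : IsEulerFtL N (Δt / ℓ) V yt) :
    ∀ n : ℕ, ∑ i ∈ Finset.Icc 1 (N - 1), |y n i - yt n i| ≤
      ∑ i ∈ Finset.Icc 1 (N - 1), |y 0 i - yt 0 i| := by
  obtain ⟨hyp, hyr⟩ := hy
  obtain ⟨hytp, hytr⟩ := hyt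
  set lam := Δt / ℓ with hlamdef
  have hlam0 : 0 ≤ lam := by positivity
  intro n
  induction n with
  | zero => exact le_refl _
  | succ n ih =>
    refine le_trans ?_ ih
    set e : ℕ → ℝ := fun i => |V (y n i) - V (yt n i)| with hedef
    have key : ∀ i ∈ Finset.Icc 1 (N - 1),
        |y (n + 1) i - yt (n + 1) i| ≤ |y n i - yt n i| - lam * e i + lam * e (i + 1) := by
      intro i hi
      rw [hyr n i hi, hytr n i hi]
      have expand : y n i + lam * (V (y n (i + 1)) - V (y n i)) -
          (yt n i + lam * (V (yt n (i + 1)) - V (yt n i))) =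
          (y n i - yt n i - lam * (V (y n i) - V (yt n i))) +
          lam * (V (y n (i + 1)) - V (yt n (i + 1))) := by ring
      rw [expand]
      have h1 := step_abs V LV hVlip hVmono lam hlam0 hCFL (y n i) (yt n i)
      calc _ ≤ |y n i - yt n i - lam * (V (y n i) - V (yt n i))| +
              |lam * (V (y n (i + 1)) - V (yt n (i + 1)))| := abs_add_le _ _
        _ ≤ |y n i - yt n i| - lam * e i + lam * e (i + 1) := by
            rw [abs_mul, abs_of_nonneg hlam0]
            exact add_le_add h1 (le_refl _)
    have heN : e N = e 1 := by simp [hedef, hyp n, hytp n]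
    calc ∑ i ∈ Finset.Icc 1 (N - 1), |y (n + 1) i - yt (n + 1) i|
        ≤ ∑ i ∈ Finset.Icc 1 (N - 1),
            (|y n i - yt n i| - lam * e i + lam * e (i + 1)) := Finset.sum_le_sum key
      _ = ∑ i ∈ Finset.Icc 1 (N - 1), |y n i - yt n i|
          - lam * ∑ i ∈ Finset.Icc 1 (N - 1), e i
          + lam * ∑ i ∈ Finset.Icc 1 (N - 1), e (i + 1) := by
          rw [Finset.sum_add_distrib, Finset.sum_sub_distrib, Finset.mul_sum, Finset.mul_sum]
      _ = ∑ i ∈ Finset.Icc 1 (N - 1), |y n i - yt n i| := by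
          rw [shift_sum N hN e heN]; ring
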